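/- (Comparison of p_* and r_* in dimension n = 1.) Let μ1 > 0, 0 ≤ δ < 1, θ := θ(μ1), p_* := 1 + (3−√δ)/μ1, and define r_*(μ1,δ) := 1 + 2(2−√δ)/(1+μ1+√δ) if √δ < θ; r_*(μ1,δ) := 2/(1+θ) if √δ = θ; r_*(μ1,δ) := 2/(1+√δ) if √δ > θ. Then: if √δ < θ then p_* < r_*; if √δ = θ then p_* = r_*; and if √δ > θ then p_* > r_*. -/

import Mathlib

/-- `θ(μ1) := 1 + μ1/2 − (1/2)√(μ1²+16)`. -/
noncomputable def theta (μ1 : ℝ) : ℝ :=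
  1 + μ1 / 2 - Real.sqrt (μ1 ^ 2 + 16) / 2

/-- `r_*(μ1,δ)` from Theorem 1.5 in dimension `n = 1`. -/
noncomputable def rStar (μ1 δ : ℝ) : ℝ :=
  if Real.sqrt δ < theta μ1 then 1 + 2 * (2 - Real.sqrt δ) / (1 + μ1 + Real.sqrt δ)
  else if Real.sqrt δ = theta μ1 then 2 / (1 + theta μ1)
  else 2 / (1 + Real.sqrt δ)

/-- Comparison of `p_* = 1 + (3−√δ)/μ1` and `r_*` in dimension `n = 1`. -/
theorem pStar_rStar_comparison (μ1 δ : ℝ) (hμ : 0 < μ1) (hδ0 : 0 ≤ δ)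
    (hδ1 : δ < 1) :
    (Real.sqrt δ < theta μ1 →
      1 + (3 - Real.sqrt δ) / μ1 < rStar μ1 δ) ∧
    (Real.sqrt δ = theta μ1 →
      1 + (3 - Real.sqrt δ) / μ1 = rStar μ1 δ) ∧
    (theta μ1 < Real.sqrt δ →
      rStar μ1 δ < 1 + (3 - Real.sqrt δ) / μ1) := by
  have hs0 : 0 ≤ Real.sqrt δ := Real.sqrt_nonneg δ
  have hs1 : Real.sqrt δ < 1 := by
    have := Real.sqrt_lt_sqrt hδ0 hδ1
    simpa using this
  set s := Real.sqrt δ with hsdef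
  have hσ2 : Real.sqrt (μ1 ^ 2 + 16) ^ 2 = μ1 ^ 2 + 16 :=
    Real.sq_sqrt (by positivity)
  set σ := Real.sqrt (μ1 ^ 2 + 16) with hσdef
  have hσpos : 0 < σ := Real.sqrt_pos.mpr (by positivity)
  have hden : 0 < 1 + s := by linarith
  have hμ' : μ1 ≠ 0 := ne_of_gt hμ
  refine ⟨?_, ?_, ?_⟩
  · intro h
    rw [rStar, if_pos h]
    have h' : σ < 2 + μ1 - 2 * s := by
      rw [theta] at h; linarith
    have hApos : 0 < σ + (2 + μ1 - 2 * s) := by linarith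
    have hf : (3 - s) * (1 + s) < μ1 * (1 - s) := by
      nlinarith [mul_pos (sub_pos.mpr h') hApos]
    have hden' : 0 < 1 + μ1 + s := by linarith
    have key : (3 - s) * (1 + μ1 + s) < 2 * (2 - s) * μ1 := by nlinarith
    have : (3 - s) / μ1 < 2 * (2 - s) / (1 + μ1 + s) := by
      rw [div_lt_div_iff₀ hμ hden']; linarith
    linarith
  · intro h
    rw [rStar, if_neg (show ¬ s < theta μ1 by rw [h]; exact lt_irrefl _), if_pos (show s = theta μ1 from h), ← h]
    have h' : σ = 2 + μ1 - 2 * s := by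
      rw [theta] at h; linarith
    have hrel : (3 - s) * (1 + s) = μ1 * (1 - s) := by nlinarith [h', hσ2]
    have hden1 : (1 : ℝ) + s ≠ 0 := ne_of_gt hden
    field_simp
    nlinarith [hrel]
  · intro h
    rw [rStar, if_neg (show ¬ s < theta μ1 from not_lt.mpr h.le),
      if_neg (show ¬ s = theta μ1 by intro he; rw [he] at h; exact lt_irrefl _ h)]
    have h' : 2 + μ1 - 2 * s < σ := by
      rw [theta] at h; linarith
    have hBpos : 0 < 2 + μ1 - 2 * s := by linarith
    have hf : μ1 * (1 - s) < (3 - s) * (1 + s) := by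
      nlinarith [mul_pos (sub_pos.mpr h') (by linarith : (0:ℝ) < σ + (2 + μ1 - 2 * s))]
    rw [div_lt_iff₀ hden]
    have heq : (1 + (3 - s) / μ1) * (1 + s) = (μ1 * (1 + s) + (3 - s) * (1 + s)) / μ1 := by
      field_simp
    rw [heq, lt_div_iff₀ hμ]
    nlinarith [hf]
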